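/- For every integer k ≥ 3 and every real ε > 0, there exists N such that for every integer m ≥ N, setting n = (k−1)^m, one has θ_k(n) ≥ ((k−1)!)^{(1/(k−2) − ε)·n}. -/

import Mathlib

/-- The value sequence of a permutation `σ` of `Fin n` avoids `k`-term arithmetic
progressions. -/
def AvoidsAP (k : ℕ) {n : ℕ} (σ : Equiv.Perm (Fin n)) : Prop :=
  ¬ ∃ (i : ℕ → Fin n) (d : ℤ), d ≠ 0 ∧ (∀ a b, a < b → b < k → i a < i b) ∧
    ∀ j, j + 1 < k → ((σ (i (j + 1)) : ℕ) : ℤ) = ((σ (i j) : ℕ) : ℤ) + d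

/-- `θ_k(n)`: the number of permutations of `{1, …, n}` avoiding `k`-term
arithmetic progressions. -/
noncomputable def theta (k n : ℕ) : ℕ :=
  Nat.card {σ : Equiv.Perm (Fin n) // AvoidsAP k σ}

/-- The recursive construction: given a permutation `π` of the `q` blocks and
permutations `τ b` inside each block, build a permutation of `Fin (q^(m+1))`. -/
def build (q m : ℕ) (π : Equiv.Perm (Fin q)) (τ : Fin q → Equiv.Perm (Fin (q^m))) :
    Equiv.Perm (Fin (q^(m+1))) :=
  (finCongr (pow_succ' q m)).trans
    (finProdFinEquiv.symm.trans
      ((Equiv.prodShear π τ).trans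
        ((Equiv.prodComm _ _).trans
          (finProdFinEquiv.trans (finCongr (pow_succ q m).symm)))))

lemma build_val {q m : ℕ} (π : Equiv.Perm (Fin q)) (τ : Fin q → Equiv.Perm (Fin (q^m)))
    (b : Fin q) (r : Fin (q^m)) (p : Fin (q^(m+1))) (hp : (p : ℕ) = (r:ℕ) + q^m * (b:ℕ)) :
    ((build q m π τ p) : ℕ) = (π b : ℕ) + q * ((τ b) r : ℕ) := by
  have h1 : (finCongr (pow_succ' q m)) p = finProdFinEquiv (b, r) := by
    apply Fin.ext; simp [hp]
  simp [build, Equiv.trans_apply, h1, Equiv.prodShear]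

lemma pos_lt {q m : ℕ} (b : Fin q) (r : Fin (q^m)) : (r:ℕ) + q^m * (b:ℕ) < q^(m+1) := by
  calc (r:ℕ) + q^m * (b:ℕ) < q^m + q^m * (b:ℕ) := by
        exact Nat.add_lt_add_right r.isLt _
    _ = q^m * ((b:ℕ)+1) := by ring
    _ ≤ q^m * q := Nat.mul_le_mul_left _ b.isLt
    _ = q^(m+1) := (pow_succ q m).symm

lemma build_inj {q m : ℕ} (hq : 0 < q)
    (π π' : Equiv.Perm (Fin q)) (τ τ' : Fin q → Equiv.Perm (Fin (q^m)))
    (h : build q m π τ = build q m π' τ') : π = π' ∧ τ = τ' := by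
  have key : ∀ (b : Fin q) (r : Fin (q^m)),
      (π b : ℕ) + q * ((τ b) r : ℕ) = (π' b : ℕ) + q * ((τ' b) r : ℕ) := by
    intro b r
    have h1 := build_val π τ b r ⟨_, pos_lt b r⟩ rfl
    have h2 := build_val π' τ' b r ⟨_, pos_lt b r⟩ rfl
    rw [h] at h1
    exact h1.symm.trans h2
  have hπ : ∀ b, π b = π' b := by
    intro b
    have hk := key b ⟨0, pow_pos hq m⟩
    have e1 := congrArg (· % q) hk
    simp only [Nat.add_mul_mod_self_left] at e1
    apply Fin.ext
    rwa [Nat.mod_eq_of_lt (π b).isLt, Nat.mod_eq_of_lt (π' b).isLt] at e1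
  have hτ : ∀ b r, (τ b) r = (τ' b) r := by
    intro b r
    have h3 := key b r
    rw [hπ b] at h3
    apply Fin.ext
    have h4 : q * ((τ b) r : ℕ) = q * ((τ' b) r : ℕ) := by omega
    exact Nat.eq_of_mul_eq_mul_left hq h4
  exact ⟨Equiv.ext hπ, funext fun b => Equiv.ext (hτ b)⟩

lemma build_avoids {k q m : ℕ} (hk : 3 ≤ k) (hq : q = k - 1)
    (π : Equiv.Perm (Fin q)) (τ : Fin q → Equiv.Perm (Fin (q^m)))
    (hτ : ∀ b, AvoidsAP k (τ b)) : AvoidsAP k (build q m π τ) := by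
  have hq2 : 2 ≤ q := by omega
  have hqm : 0 < q^m := pow_pos (by omega) m
  rintro ⟨i, d, hd, hmono, heq⟩
  set B : ℕ → Fin q := fun j => ⟨(i j : ℕ) / q^m, by
    exact Nat.div_lt_of_lt_mul (lt_of_lt_of_eq (i j).isLt (pow_succ q m))⟩ with hB
  set R : ℕ → Fin (q^m) := fun j => ⟨(i j : ℕ) % q^m, Nat.mod_lt _ hqm⟩ with hR
  have hdec : ∀ j, ((i j : ℕ)) = (R j : ℕ) + q^m * (B j : ℕ) := by
    intro j; simp [hR, hB, Nat.mod_add_div]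
  have hval : ∀ j, ((build q m π τ (i j)) : ℕ) = (π (B j) : ℕ) + q * ((τ (B j)) (R j) : ℕ) :=
    fun j => build_val π τ (B j) (R j) (i j) (hdec j)
  have heq' : ∀ j, j + 1 < k →
      ((π (B (j+1)) : ℕ) : ℤ) + q * (((τ (B (j+1))) (R (j+1)) : ℕ) : ℤ) =
      ((π (B j) : ℕ) : ℤ) + q * (((τ (B j)) (R j) : ℕ) : ℤ) + d := by
    intro j hj
    have h := heq j hj
    rw [hval (j+1), hval j] at h
    push_cast at h ⊢
    linarith
  by_cases hdvd : (q : ℤ) ∣ d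
  · obtain ⟨e, rfl⟩ := hdvd
    have he : e ≠ 0 := by rintro rfl; simp at hd
    have hq0 : (q:ℤ) ≠ 0 := by exact_mod_cast (by omega : q ≠ 0)
    have key : ∀ j, j + 1 < k → B (j+1) = B j ∧
        (((τ (B (j+1))) (R (j+1)) : ℕ) : ℤ) = (((τ (B j)) (R j) : ℕ) : ℤ) + e := by
      intro j hj
      have h := heq' j hj
      have h1 : ((π (B (j+1)) : ℕ) : ℤ) - ((π (B j) : ℕ) : ℤ) =
          (q:ℤ) * ((((τ (B j)) (R j) : ℕ) : ℤ) + e - (((τ (B (j+1))) (R (j+1)) : ℕ) : ℤ)) := by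
        rw [mul_sub, mul_add]; linarith
      have hlt1 : ((π (B (j+1)) : ℕ) : ℤ) < q := by exact_mod_cast (π (B (j+1))).isLt
      have hlt2 : ((π (B j) : ℕ) : ℤ) < q := by exact_mod_cast (π (B j)).isLt
      have hge1 : (0:ℤ) ≤ ((π (B (j+1)) : ℕ) : ℤ) := Int.natCast_nonneg _
      have hge2 : (0:ℤ) ≤ ((π (B j) : ℕ) : ℤ) := Int.natCast_nonneg _
      have h2 : ((π (B (j+1)) : ℕ) : ℤ) - ((π (B j) : ℕ) : ℤ) = 0 := by
        apply Int.eq_zero_of_abs_lt_dvd ⟨_, h1⟩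
        rw [abs_lt]; constructor <;> linarith
      have hπ : π (B (j+1)) = π (B j) := by
        apply Fin.ext
        have := sub_eq_zero.mp h2
        exact_mod_cast this
      have hπv : ((π (B (j+1)) : ℕ) : ℤ) = ((π (B j) : ℕ) : ℤ) := by rw [hπ]
      refine ⟨π.injective hπ, ?_⟩
      have h3 : (q:ℤ) * (((τ (B (j+1))) (R (j+1)) : ℕ) : ℤ) =
          (q:ℤ) * ((((τ (B j)) (R j) : ℕ) : ℤ) + e) := by
        rw [mul_add]; linarith
      exact mul_left_cancel₀ hq0 h3
    have hB0 : ∀ j, j < k → B j = B 0 := by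
      intro j
      induction j with
      | zero => intro _; rfl
      | succ n ih => intro hj; rw [(key n hj).1]; exact ih (by omega)
    apply hτ (B 0)
    refine ⟨fun j => R j, e, he, ?_, ?_⟩
    · intro a b hab hbk
      have h1 : (i a : ℕ) < (i b : ℕ) := hmono a b hab hbk
      have ha := hdec a; have hb := hdec b
      rw [hB0 a (by omega)] at ha
      rw [hB0 b hbk] at hb
      obtain ⟨C, hC⟩ : ∃ C, q^m * (B 0 : ℕ) = C := ⟨_, rfl⟩
      rw [hC] at ha hb
      show R a < R b
      rw [Fin.lt_def]
      omega
    · intro j hj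
      have h := (key j hj).2
      rw [hB0 j (by omega), hB0 (j+1) (by omega)] at h
      exact h
  · have hBlt : ∀ j, j + 1 < k → (B j : ℕ) < (B (j+1) : ℕ) := by
      intro j hj
      have hle : (B j : ℕ) ≤ (B (j+1) : ℕ) := by
        have h := hmono j (j+1) (by omega) hj
        exact Nat.div_le_div_right (le_of_lt h)
      rcases lt_or_eq_of_le hle with h | h
      · exact h
      · exfalso
        apply hdvd
        have hBeq : B (j+1) = B j := Fin.ext h.symm
        have heqj := heq' j hj
        rw [hBeq] at heqj
        refine ⟨(((τ (B j)) (R (j+1)) : ℕ) : ℤ) - (((τ (B j)) (R j) : ℕ) : ℤ), ?_⟩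
        rw [mul_sub]; linarith
    have hstep : ∀ j, j < k → j ≤ (B j : ℕ) := by
      intro j
      induction j with
      | zero => intro _; exact Nat.zero_le _
      | succ n ih =>
        intro hj
        have h1 := hBlt n hj
        have h2 := ih (by omega)
        omega
    have h1 := hstep (k-1) (by omega)
    have h2 := (B (k-1)).isLt
    omega

lemma theta_one {k : ℕ} (hk : 3 ≤ k) : 1 ≤ theta k 1 := by
  have hA : AvoidsAP k (1 : Equiv.Perm (Fin 1)) := by
    rintro ⟨i, d, hd, hmono, -⟩
    have h1 := hmono 0 1 (by omega) (by omega)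
    have h2 : i 0 = i 1 := Subsingleton.elim _ _
    rw [h2] at h1
    exact lt_irrefl _ h1
  have : Nonempty {σ : Equiv.Perm (Fin 1) // AvoidsAP k σ} := ⟨⟨1, hA⟩⟩
  exact Nat.card_pos

lemma theta_rec {k q m : ℕ} (hk : 3 ≤ k) (hq : q = k - 1) :
    q.factorial * (theta k (q^m))^q ≤ theta k (q^(m+1)) := by
  have hq1 : 0 < q := by omega
  let F : Equiv.Perm (Fin q) × (Fin q → {σ : Equiv.Perm (Fin (q^m)) // AvoidsAP k σ}) →
      {σ : Equiv.Perm (Fin (q^(m+1))) // AvoidsAP k σ} :=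
    fun pt => ⟨build q m pt.1 (fun b => (pt.2 b).1),
      build_avoids hk hq pt.1 _ (fun b => (pt.2 b).2)⟩
  have hF : Function.Injective F := by
    rintro ⟨π, τ⟩ ⟨π', τ'⟩ hxy
    have h0 : build q m π (fun b => (τ b).1) = build q m π' (fun b => (τ' b).1) :=
      congrArg Subtype.val hxy
    obtain ⟨h1, h2⟩ := build_inj hq1 _ _ _ _ h0
    refine Prod.ext h1 ?_
    funext b
    exact Subtype.ext (congrFun h2 b)
  have hcard := Nat.card_le_card_of_injective F hF
  have e1 : Nat.card (Equiv.Perm (Fin q) × (Fin q → {σ : Equiv.Perm (Fin (q^m)) // AvoidsAP k σ}))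
      = q.factorial * (theta k (q^m))^q := by
    rw [Nat.card_prod, Nat.card_pi, Nat.card_eq_fintype_card, Fintype.card_perm, Fintype.card_fin]
    congr 1
    rw [Finset.prod_const, Finset.card_univ, Fintype.card_fin]
    rfl
  rw [← e1]
  exact hcard

def expo (q : ℕ) : ℕ → ℕ
  | 0 => 0
  | (m+1) => 1 + q * expo q m

lemma expo_mul (s : ℕ) : ∀ m, s * expo (s+1) m + 1 = (s+1)^m
  | 0 => by simp [expo]
  | (m+1) => by
    have ih := expo_mul s m
    rw [show expo (s+1) (m+1) = 1 + (s+1) * expo (s+1) m from rfl]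
    calc s * (1 + (s+1) * expo (s+1) m) + 1 = (s+1) * (s * expo (s+1) m + 1) := by ring
      _ = (s+1) * (s+1)^m := by rw [ih]
      _ = (s+1)^(m+1) := (pow_succ' _ _).symm

lemma theta_pow {k q : ℕ} (hk : 3 ≤ k) (hq : q = k - 1) :
    ∀ m, q.factorial ^ (expo q m) ≤ theta k (q^m)
  | 0 => by simpa [expo, pow_zero] using theta_one hk
  | (m+1) => by
    have ih := theta_pow hk hq m
    calc q.factorial ^ (expo q (m+1))
        = q.factorial * (q.factorial ^ (expo q m))^q := by
          rw [show expo q (m+1) = 1 + q * expo q m from rfl, pow_add, pow_one, pow_mul']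
      _ ≤ q.factorial * (theta k (q^m))^q :=
          Nat.mul_le_mul_left _ (Nat.pow_le_pow_left ih q)
      _ ≤ theta k (q^(m+1)) := theta_rec hk hq

/-- For every `k ≥ 3` and `ε > 0`, if `n = (k−1)^m` is a sufficiently large power of
`k − 1`, then `θ_k(n) ≥ ((k−1)!)^{(1/(k−2) − ε) n}`. -/
theorem theta_lower_bound (k : ℕ) (hk : 3 ≤ k) (ε : ℝ) (hε : 0 < ε) :
    ∃ N : ℕ, ∀ m : ℕ, N ≤ m →
      Real.rpow ((k - 1).factorial : ℝ)
          ((1 / ((k : ℝ) - 2) - ε) * (((k - 1) ^ m : ℕ) : ℝ)) ≤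
        (theta k ((k - 1) ^ m) : ℝ) := by
  refine ⟨⌈1/ε⌉₊ + 1, fun m hm => ?_⟩
  set q := k - 1 with hqdef
  have hq2 : 2 ≤ q := by omega
  have hmain := theta_pow hk hqdef m
  have hfact1 : (1:ℝ) ≤ (q.factorial : ℝ) := by
    exact_mod_cast Nat.one_le_iff_ne_zero.mpr (Nat.factorial_ne_zero q)
  set t := q - 1 with htdef
  have hqt : q = t + 1 := by omega
  have hid : t * expo q m + 1 = q ^ m := by rw [hqt]; exact expo_mul t m
  have ht1 : (1:ℝ) ≤ (t:ℝ) := by exact_mod_cast (by omega : 1 ≤ t)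
  have hkt : (k:ℝ) - 2 = (t:ℝ) := by
    rw [show t = k - 2 from by omega, Nat.cast_sub (by omega : 2 ≤ k)]
    norm_num
  have hX : ((q^m : ℕ) : ℝ) = (t:ℝ) * (expo q m : ℝ) + 1 := by exact_mod_cast hid.symm
  have hceil : (⌈1/ε⌉₊ : ℕ) ≤ q^m := by
    have h1 : ⌈1/ε⌉₊ < 2^m := lt_of_le_of_lt (by omega) (Nat.lt_two_pow_self (n := m))
    exact le_of_lt (lt_of_lt_of_le h1 (Nat.pow_le_pow_left hq2 m))
  have hXlarge : 1/ε ≤ ((q^m : ℕ) : ℝ) := le_trans (Nat.le_ceil _) (by exact_mod_cast hceil)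
  have hX0 : (0:ℝ) ≤ ((q^m : ℕ) : ℝ) := Nat.cast_nonneg _
  have key1 : 1 ≤ ε * (t:ℝ) * ((q^m : ℕ) : ℝ) := by
    have h2 : ε * (1/ε) ≤ ε * ((q^m:ℕ):ℝ) := mul_le_mul_of_nonneg_left hXlarge hε.le
    have h3 : ε * (1/ε) = 1 := by field_simp
    nlinarith [mul_nonneg (sub_nonneg.mpr ht1) (mul_nonneg hε.le hX0)]
  have ht0 : (0:ℝ) < (t:ℝ) := by linarith
  have hexp : (1 / ((k:ℝ) - 2) - ε) * ((q ^ m : ℕ) : ℝ) ≤ ((expo q m : ℕ) : ℝ) := by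
    rw [hkt]
    have hE : ((expo q m : ℕ) : ℝ) = (((q^m:ℕ):ℝ) - 1) / (t:ℝ) := by
      rw [hX]
      field_simp
      ring
    rw [hE, le_div_iff₀ ht0]
    have h5 : (1/(t:ℝ) - ε) * ((q^m:ℕ):ℝ) * (t:ℝ)
        = ((q^m:ℕ):ℝ) - ε * (t:ℝ) * ((q^m:ℕ):ℝ) := by
      field_simp
    rw [h5]
    linarith
  calc Real.rpow ((q.factorial : ℕ) : ℝ) ((1 / ((k:ℝ) - 2) - ε) * (((q^m : ℕ) : ℕ) : ℝ))
      ≤ Real.rpow ((q.factorial : ℕ) : ℝ) ((expo q m : ℕ) : ℝ) :=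
        Real.rpow_le_rpow_of_exponent_le hfact1 hexp
    _ = ((q.factorial ^ expo q m : ℕ) : ℝ) := by
        show ((q.factorial : ℕ) : ℝ) ^ (((expo q m : ℕ)) : ℝ) = _
        rw [Real.rpow_natCast]
        push_cast
        ring
    _ ≤ ((theta k (q^m) : ℕ) : ℝ) := by exact_mod_cast hmain
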